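/- The rank of P₁ (the poset of join-irreducibles of D₁) equals the maximum over j = 1,…,v of u - k - a_{l_j} + 2 l_j - 2, where {l₁ < ⋯ < l_v} = {i ≤ k : a_i + 1 < a_{i+1}, a_i < u} (with a_{k+1} := u+1). -/

import Mathlib

/-- Membership in the distributive lattice `D₁` of strictly increasing `k`-tuples
`(c₁,…,c_k)` with `1 ≤ cᵢ ≤ u` and `cᵢ ≥ aᵢ`, ordered componentwise. -/
def memD1 {k : ℕ} (u : ℕ) (a c : Fin k → ℕ) : Prop :=
  StrictMono c ∧ (∀ i, 1 ≤ c i) ∧ (∀ i, c i ≤ u) ∧ ∀ i, a i ≤ c i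

/-- Join-irreducibility in `D₁`. -/
def joinIrredD1 {k : ℕ} (u : ℕ) (a c : Fin k → ℕ) : Prop :=
  memD1 u a c ∧ c ≠ a ∧
    ∀ d e : Fin k → ℕ, memD1 u a d → memD1 u a e → c = d ⊔ e → c = d ∨ c = e

/-- The rank of the poset `P₁` of join-irreducible elements of `D₁`:
the length of its longest chain. -/
noncomputable def rankP1 {k : ℕ} (u : ℕ) (a : Fin k → ℕ) : ℕ :=
  sSup {m : ℕ | ∃ f : Fin (m + 1) → (Fin k → ℕ),
    (∀ t, joinIrredD1 u a (f t)) ∧ StrictMono f}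

/-- `a_{i+1}` with the convention `a_{k+1} := u + 1`. -/
def aNext {k : ℕ} (u : ℕ) (a : Fin k → ℕ) (i : Fin k) : ℕ :=
  if h : (i : ℕ) + 1 < k then a ⟨(i : ℕ) + 1, h⟩ else u + 1

/-- Membership of the (0-based) index `i` in `{i ≤ k : aᵢ + 1 < a_{i+1}, aᵢ < u}`. -/
def memL {k : ℕ} (u : ℕ) (a : Fin k → ℕ) (i : Fin k) : Prop :=
  a i + 1 < aNext u a i ∧ a i < u

namespace RankAux

variable {k u : ℕ}

/-- The candidate join-irreducible elements. -/
def cellJI (a : Fin k → ℕ) (i : Fin k) (b : ℕ) : Fin k → ℕ :=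
  fun j => if (j : ℕ) < (i : ℕ) then a j else max (a j) (b + ((j : ℕ) - (i : ℕ)))

lemma cell_apply_lt (a : Fin k → ℕ) (i : Fin k) (b : ℕ) {j : Fin k}
    (h : (j : ℕ) < (i : ℕ)) : cellJI a i b j = a j := by
  simp [cellJI, h]

lemma cell_apply_ge (a : Fin k → ℕ) (i : Fin k) (b : ℕ) {j : Fin k}
    (h : (i : ℕ) ≤ (j : ℕ)) : cellJI a i b j = max (a j) (b + ((j : ℕ) - (i : ℕ))) := by
  simp [cellJI, Nat.not_lt.mpr h]

lemma cell_apply_self (a : Fin k → ℕ) (i : Fin k) {b : ℕ} (hb : a i < b) :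
    cellJI a i b i = b := by
  rw [cell_apply_ge a i b le_rfl]
  simp [Nat.le_of_lt hb]

/-- Strict monotonicity from consecutive steps. -/
lemma strictMono_of_consec {n : ℕ} {α : Type*} [Preorder α] {f : Fin n → α}
    (h : ∀ p q : Fin n, (q : ℕ) = (p : ℕ) + 1 → f p < f q) : StrictMono f := by
  have key : ∀ d (p q : Fin n), (q : ℕ) = (p : ℕ) + d + 1 → f p < f q := by
    intro d
    induction d with
    | zero => intro p q hq; exact h p q (by omega)
    | succ d2 ih =>
      intro p q hq
      have hlt : (p : ℕ) + d2 + 1 < n := by omega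
      exact lt_trans (ih p ⟨(p : ℕ) + d2 + 1, hlt⟩ rfl)
        (h ⟨(p : ℕ) + d2 + 1, hlt⟩ q (by simp; omega))
  intro p q hpq
  have : (p : ℕ) < (q : ℕ) := hpq
  exact key ((q : ℕ) - (p : ℕ) - 1) p q (by omega)

/-- Strict monotone functions grow at least linearly. -/
lemma strictMono_add_le {a : Fin k → ℕ} (ha : StrictMono a) :
    ∀ (d : ℕ) (p q : Fin k), (q : ℕ) = (p : ℕ) + d → a p + d ≤ a q := by
  intro d
  induction d with
  | zero =>
    intro p q hq
    have : p = q := Fin.ext (by omega)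
    subst this; omega
  | succ n ih =>
    intro p q hq
    have hlt : (p : ℕ) + n < k := by omega
    have h1 := ih p ⟨(p : ℕ) + n, hlt⟩ rfl
    have h2 : a ⟨(p : ℕ) + n, hlt⟩ < a q := ha (by simp [Fin.lt_def]; omega)
    omega

lemma exists_min_lt {c d : Fin k → ℕ} (hle : ∀ j, d j ≤ c j) (hne : c ≠ d) :
    ∃ p : Fin k, d p < c p ∧ ∀ j : Fin k, (j : ℕ) < (p : ℕ) → d j = c j := by
  classical
  set S : Finset (Fin k) := Finset.univ.filter (fun j => d j < c j) with hS
  have hSne : S.Nonempty := by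
    by_contra h
    rw [Finset.not_nonempty_iff_eq_empty] at h
    apply hne
    funext j
    have : j ∉ S := by simp [h]
    simp [hS] at this
    have := hle j
    omega
  refine ⟨S.min' hSne, (Finset.mem_filter.mp (S.min'_mem hSne)).2, ?_⟩
  intro j hj
  by_contra hne2
  have hjS : j ∈ S := by
    simp only [hS, Finset.mem_filter, Finset.mem_univ, true_and]
    have := hle j; omega
  have := S.min'_le j hjS
  rw [Fin.le_def] at this
  omega

variable {a : Fin k → ℕ}

lemma cell_memD1 (ha : StrictMono a) (ha1 : ∀ i, 1 ≤ a i) (hu : ∀ j, a j ≤ u)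
    {i : Fin k} {b : ℕ} (hb : a i < b) (hbu : b + (k - 1) ≤ u + (i : ℕ)) :
    memD1 u a (cellJI a i b) := by
  refine ⟨?_, ?_, ?_, ?_⟩
  · apply strictMono_of_consec
    intro p q hq
    rcases Nat.lt_or_ge (q : ℕ) (i : ℕ) with h | h
    · rw [cell_apply_lt a i b h, cell_apply_lt a i b (by omega)]
      exact ha (by rw [Fin.lt_def]; omega)
    · rw [cell_apply_ge a i b h]
      rcases Nat.lt_or_ge (p : ℕ) (i : ℕ) with h2 | h2
      · rw [cell_apply_lt a i b h2]
        have : a p < a q := ha (by rw [Fin.lt_def]; omega)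
        exact lt_of_lt_of_le this (le_max_left _ _)
      · rw [cell_apply_ge a i b h2]
        have h3 : a p < a q := ha (by rw [Fin.lt_def]; omega)
        have h4 : b + ((p : ℕ) - (i : ℕ)) < b + ((q : ℕ) - (i : ℕ)) := by omega
        exact max_lt_max h3 h4
  · intro j
    rcases Nat.lt_or_ge (j : ℕ) (i : ℕ) with h | h
    · rw [cell_apply_lt a i b h]; exact ha1 j
    · rw [cell_apply_ge a i b h]
      exact le_trans (ha1 j) (le_max_left _ _)
  · intro j
    rcases Nat.lt_or_ge (j : ℕ) (i : ℕ) with h | h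
    · rw [cell_apply_lt a i b h]; exact hu j
    · rw [cell_apply_ge a i b h]
      have h1 : b + ((j : ℕ) - (i : ℕ)) ≤ u := by
        have := j.isLt; have := i.isLt; omega
      exact max_le (hu j) h1
  · intro j
    rcases Nat.lt_or_ge (j : ℕ) (i : ℕ) with h | h
    · rw [cell_apply_lt a i b h]
    · rw [cell_apply_ge a i b h]; exact le_max_left _ _

lemma cell_joinIrred (ha : StrictMono a) (ha1 : ∀ i, 1 ≤ a i) (hu : ∀ j, a j ≤ u)
    {i : Fin k} {b : ℕ} (hb : a i < b) (hbu : b + (k - 1) ≤ u + (i : ℕ)) :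
    joinIrredD1 u a (cellJI a i b) := by
  refine ⟨cell_memD1 ha ha1 hu hb hbu, ?_, ?_⟩
  · intro hca
    have := congrFun hca i
    rw [cell_apply_self a i hb] at this
    omega
  · intro d e hd he hde
    by_contra hcon
    push_neg at hcon
    obtain ⟨hcd, hce⟩ := hcon
    have hdle : ∀ j, d j ≤ cellJI a i b j := by
      intro j
      have := congrFun hde j
      rw [Pi.sup_apply] at this
      omega
    have hele : ∀ j, e j ≤ cellJI a i b j := by
      intro j
      have := congrFun hde j
      rw [Pi.sup_apply] at this
      omega
    -- p is the minimal index where d is smaller; it must equal i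
    have key : ∀ w : Fin k → ℕ, memD1 u a w → (∀ j, w j ≤ cellJI a i b j) →
        cellJI a i b ≠ w → w i < cellJI a i b i := by
      intro w hw hwle hwne
      obtain ⟨p, hplt, hpmin⟩ := exists_min_lt hwle hwne
      have hpi : (i : ℕ) ≤ (p : ℕ) := by
        by_contra h
        push_neg at h
        rw [cell_apply_lt a i b h] at hplt
        have := hw.2.2.2 p
        omega
      have hip : (p : ℕ) ≤ (i : ℕ) := by
        by_contra h
        push_neg at h
        set p' : Fin k := ⟨(p : ℕ) - 1, by omega⟩ with hp'def
        have hp' : (p' : ℕ) = (p : ℕ) - 1 := rfl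
        have h1 : w p' = cellJI a i b p' := hpmin p' (by omega)
        have h2 : cellJI a i b p' = max (a p') (b + ((p' : ℕ) - (i : ℕ))) :=
          cell_apply_ge a i b (by omega)
        have h1' : b + ((p' : ℕ) - (i : ℕ)) ≤ w p' := by
          rw [h1, h2]; exact le_max_right _ _
        have h4 : w p' < w p := hw.1 (by rw [Fin.lt_def]; omega)
        have h3 : a p ≤ w p := hw.2.2.2 p
        have h7 : b + ((p : ℕ) - (i : ℕ)) ≤ w p := by omega
        have h5 : cellJI a i b p = max (a p) (b + ((p : ℕ) - (i : ℕ))) :=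
          cell_apply_ge a i b (by omega)
        rw [h5] at hplt
        exact absurd hplt (not_lt.2 (max_le h3 h7))
      have : p = i := Fin.ext (by omega)
      rw [this] at hplt
      exact hplt
    have h1 := key d hd hdle (fun h => hcd h)
    have h2 := key e he hele (fun h => hce h)
    have := congrFun hde i
    rw [Pi.sup_apply] at this
    have : cellJI a i b i ≤ max (d i) (e i) := le_of_eq this
    have hm : max (d i) (e i) < cellJI a i b i := max_lt h1 h2
    omega

lemma joinIrred_eq_cell (ha : StrictMono a) (ha1 : ∀ i, 1 ≤ a i) {c : Fin k → ℕ}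
    (hc : joinIrredD1 u a c) :
    ∃ (i : Fin k) (b : ℕ), a i < b ∧ b + (k - 1) ≤ u + (i : ℕ) ∧ c = cellJI a i b := by
  classical
  obtain ⟨hmem, hne, hirr⟩ := hc
  obtain ⟨i, hilt, himin⟩ := exists_min_lt hmem.2.2.2 hne
  set b := c i with hbdef
  -- every index above i satisfies the recursion c j = max (a j) (c (j-1) + 1)
  have step : ∀ j : Fin k, (hj : (i : ℕ) < (j : ℕ)) →
      c j = max (a j) (c ⟨(j : ℕ) - 1, by omega⟩ + 1) := by
    intro j hj
    set j' : Fin k := ⟨(j : ℕ) - 1, by omega⟩ with hj'def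
    have hj' : (j' : ℕ) = (j : ℕ) - 1 := rfl
    have hlow : c j' < c j := hmem.1 (by rw [Fin.lt_def]; omega)
    have hge : max (a j) (c j' + 1) ≤ c j := max_le (hmem.2.2.2 j) (by omega)
    rcases eq_or_lt_of_le hge with h | h
    · exact h.symm
    · exfalso
      have hja : a j < c j := lt_of_le_of_lt (le_max_left _ _) h
      have hjc : c j' + 1 < c j := lt_of_le_of_lt (le_max_right _ _) h
      set d := Function.update c j (c j - 1) with hddef
      set e := Function.update c i (c i - 1) with hedef
      have hij : i ≠ j := by intro h; rw [h] at hj; omega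
      have hd : memD1 u a d := by
        refine ⟨?_, ?_, ?_, ?_⟩
        · apply strictMono_of_consec
          intro p q hq
          have hmono : c p < c q := hmem.1 (by rw [Fin.lt_def]; omega)
          by_cases hpj : p = j
          · by_cases hqj : q = j
            · exfalso; rw [hpj, hqj] at hq; omega
            · simp only [hpj, hddef, Function.update_self, Function.update_of_ne hqj]
              rw [hpj] at hmono
              omega
          · by_cases hqj : q = j
            · simp only [hqj, hddef, Function.update_self, Function.update_of_ne hpj]
              rw [hqj] at hq
              have hpj' : p = j' := Fin.ext (by rw [hj']; omega)
              rw [hpj']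
              omega
            · simp only [hddef, Function.update_of_ne hpj, Function.update_of_ne hqj]
              exact hmono
        · intro p
          rcases eq_or_ne p j with rfl | hpj
          · simp only [hddef, Function.update_self]
            have := ha1 p; omega
          · simp only [hddef, Function.update_of_ne hpj]; exact hmem.2.1 p
        · intro p
          rcases eq_or_ne p j with rfl | hpj
          · simp only [hddef, Function.update_self]
            have := hmem.2.2.1 p; omega
          · simp only [hddef, Function.update_of_ne hpj]; exact hmem.2.2.1 p
        · intro p
          rcases eq_or_ne p j with rfl | hpj
          · simp only [hddef, Function.update_self]; omega
          · simp only [hddef, Function.update_of_ne hpj]; exact hmem.2.2.2 p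
      have he : memD1 u a e := by
        refine ⟨?_, ?_, ?_, ?_⟩
        · apply strictMono_of_consec
          intro p q hq
          have hmono : c p < c q := hmem.1 (by rw [Fin.lt_def]; omega)
          by_cases hpi : p = i
          · by_cases hqi : q = i
            · exfalso; rw [hpi, hqi] at hq; omega
            · simp only [hpi, hedef, Function.update_self, Function.update_of_ne hqi]
              rw [hpi] at hmono
              omega
          · by_cases hqi : q = i
            · simp only [hqi, hedef, Function.update_self, Function.update_of_ne hpi]
              rw [hqi] at hq
              have hpa := himin p (by omega)
              have hplta : a p < a i := ha (by rw [Fin.lt_def]; omega)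
              omega
            · simp only [hedef, Function.update_of_ne hpi, Function.update_of_ne hqi]
              exact hmono
        · intro p
          rcases eq_or_ne p i with rfl | hpi
          · simp only [hedef, Function.update_self]
            have := ha1 p; omega
          · simp only [hedef, Function.update_of_ne hpi]; exact hmem.2.1 p
        · intro p
          rcases eq_or_ne p i with rfl | hpi
          · simp only [hedef, Function.update_self]
            have := hmem.2.2.1 p; omega
          · simp only [hedef, Function.update_of_ne hpi]; exact hmem.2.2.1 p
        · intro p
          rcases eq_or_ne p i with rfl | hpi
          · simp only [hedef, Function.update_self]; omega
          · simp only [hedef, Function.update_of_ne hpi]; exact hmem.2.2.2 p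
      have hsup : c = d ⊔ e := by
        funext p
        rw [Pi.sup_apply]
        by_cases hpj : p = j
        · simp only [hpj, hddef, hedef, Function.update_self, Function.update_of_ne (Ne.symm hij)]
          have h9 : c j ≥ 1 := by have := ha1 j; omega
          omega
        · by_cases hpi : p = i
          · simp only [hpi, hddef, hedef, Function.update_self, Function.update_of_ne hij]
            omega
          · simp only [hddef, hedef, Function.update_of_ne hpj, Function.update_of_ne hpi]
            simp
      rcases hirr d e hd he hsup with h | h
      · have := congrFun h j
        simp only [hddef, Function.update_self] at this
        omega
      · have := congrFun h i
        simp only [hedef, Function.update_self] at this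
        omega
  -- closed form
  have closed : ∀ t : ℕ, ∀ j : Fin k, (j : ℕ) = (i : ℕ) + t → c j = max (a j) (b + t) := by
    intro t
    induction t with
    | zero =>
      intro j hj
      have : j = i := Fin.ext (by omega)
      subst this
      simp [hbdef]
      omega
    | succ n ih =>
      intro j hj
      have hj1 : (i : ℕ) < (j : ℕ) := by omega
      have hs := step j hj1
      set j' : Fin k := ⟨(j : ℕ) - 1, by omega⟩ with hj'def
      have hih := ih j' (by simp [hj'def]; omega)
      have haj : a j' < a j := ha (by rw [Fin.lt_def]; simp [hj'def]; omega)
      rw [hih] at hs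
      rcases le_total (a j') (b + n) with h | h
      · rw [max_eq_right h] at hs
        rw [hs]
        congr 1
      · rw [max_eq_left h] at hs
        rw [hs, max_eq_left (by omega), max_eq_left (by omega)]
  refine ⟨i, b, hilt, ?_, ?_⟩
  · have hklt : k - 1 < k := by have := i.isLt; omega
    set jk : Fin k := ⟨k - 1, hklt⟩ with hjkdef
    have h1 := closed ((k : ℕ) - 1 - (i : ℕ)) jk (by simp [hjkdef]; have := i.isLt; omega)
    have h2 : c jk ≤ u := hmem.2.2.1 jk
    have h3 : b + (k - 1 - (i : ℕ)) ≤ c jk := by rw [h1]; exact le_max_right _ _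
    have := i.isLt
    omega
  · funext j
    rcases Nat.lt_or_ge (j : ℕ) (i : ℕ) with h | h
    · rw [cell_apply_lt a i b h]
      exact (himin j h).symm ▸ rfl
    · rw [cell_apply_ge a i b h]
      exact closed ((j : ℕ) - (i : ℕ)) j (by omega)


lemma cell_le_pairs {i i' : Fin k} {b b' : ℕ} (hb : a i < b) (hb' : a i' < b')
    (h : ∀ j, cellJI a i b j ≤ cellJI a i' b' j) :
    (i' : ℕ) ≤ (i : ℕ) ∧ b + (i' : ℕ) ≤ b' + (i : ℕ) := by
  have hii : (i' : ℕ) ≤ (i : ℕ) := by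
    by_contra hcon
    push_neg at hcon
    have h1 := h i
    rw [cell_apply_self a i hb, cell_apply_lt a i' b' hcon] at h1
    omega
  refine ⟨hii, ?_⟩
  have h1 := h i
  rw [cell_apply_self a i hb, cell_apply_ge a i' b' hii] at h1
  omega

lemma cell_lt_cell (ha : StrictMono a) {i i' : Fin k} {b b' : ℕ}
    (hb : a i < b) (hb' : a i' < b')
    (hii : (i' : ℕ) ≤ (i : ℕ)) (hbb : b + (i' : ℕ) ≤ b' + (i : ℕ))
    (hne : ¬((i : ℕ) = (i' : ℕ) ∧ b = b')) :
    cellJI a i b < cellJI a i' b' := by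
  have hle : cellJI a i b ≤ cellJI a i' b' := by
    rw [Pi.le_def]
    intro j
    rcases Nat.lt_or_ge (j : ℕ) (i' : ℕ) with h | h
    · rw [cell_apply_lt a i b (by omega), cell_apply_lt a i' b' h]
    · rw [cell_apply_ge a i' b' h]
      rcases Nat.lt_or_ge (j : ℕ) (i : ℕ) with h2 | h2
      · rw [cell_apply_lt a i b h2]
        exact le_max_left _ _
      · rw [cell_apply_ge a i b h2]
        omega
  rw [lt_iff_le_and_ne]
  refine ⟨hle, ?_⟩
  intro heq
  by_cases h3 : (i' : ℕ) = (i : ℕ)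
  · have hfin : i' = i := Fin.ext h3
    subst hfin
    have := congrFun heq i'
    rw [cell_apply_self a i' hb, cell_apply_self a i' hb'] at this
    exact hne ⟨rfl, this⟩
  · have hlt2 : (i' : ℕ) < (i : ℕ) := by omega
    have := congrFun heq i'
    rw [cell_apply_lt a i b hlt2, cell_apply_self a i' hb'] at this
    omega

lemma cell_lt_phi {i i' : Fin k} {b b' : ℕ} (hb : a i < b) (hb' : a i' < b')
    (h : cellJI a i b < cellJI a i' b') :
    (b : ℤ) - 2 * ((i : ℕ) : ℤ) < (b' : ℤ) - 2 * ((i' : ℕ) : ℤ) := by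
  obtain ⟨hle, hne⟩ := lt_iff_le_and_ne.mp h
  obtain ⟨h1, h2⟩ := cell_le_pairs hb hb' (Pi.le_def.mp hle)
  by_cases h3 : (i : ℕ) = (i' : ℕ) ∧ b = b'
  · exfalso
    apply hne
    have : i = i' := Fin.ext h3.1
    rw [this, h3.2]
  · omega

/-- The row index of the `t`-th element of the staircase chain. -/
def rowOf (i : Fin k) (t : ℕ) : Fin k :=
  ⟨(i : ℕ) - t, lt_of_le_of_lt (Nat.sub_le _ _) i.isLt⟩

@[simp] lemma rowOf_val (i : Fin k) (t : ℕ) : ((rowOf i t : Fin k) : ℕ) = (i : ℕ) - t := rfl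

/-- Value of b for the `t`-th element of the staircase chain starting in row `i`. -/
def bvOf (a : Fin k → ℕ) (i : Fin k) (t : ℕ) : ℕ :=
  a i + 1 + (t - (i : ℕ)) - min t (i : ℕ)

lemma exists_chain (ha : StrictMono a) (ha1 : ∀ i, 1 ≤ a i) (hu : ∀ j, a j ≤ u)
    (i : Fin k) (hrow : a i + k ≤ u + (i : ℕ)) :
    ∃ f : Fin ((u + 2 * (i : ℕ) - k - a i) + 1) → (Fin k → ℕ),
      (∀ t, joinIrredD1 u a (f t)) ∧ StrictMono f := by
  have hk1 : 1 ≤ k := by have := i.isLt; omega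
  have hai : (i : ℕ) + 1 ≤ a i := by
    have h1 := strictMono_add_le ha (i : ℕ) ⟨0, by omega⟩ i (by simp)
    have h2 := ha1 ⟨0, by omega⟩
    omega
  set m := u + 2 * (i : ℕ) - k - a i with hm
  have hrowt : ∀ t : ℕ, t ≤ m → a (rowOf i t) < bvOf a i t := by
    intro t _
    have h1 := strictMono_add_le ha (min t (i : ℕ)) (rowOf i t) i (by simp; omega)
    rw [bvOf]
    omega
  have hbt : ∀ t : ℕ, t ≤ m → bvOf a i t + (k - 1) ≤ u + ((rowOf i t : Fin k) : ℕ) := by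
    intro t ht
    rw [bvOf, rowOf_val]
    omega
  refine ⟨fun t => cellJI a (rowOf i (t : ℕ)) (bvOf a i (t : ℕ)), ?_, ?_⟩
  · intro t
    have htle : (t : ℕ) ≤ m := by have := t.isLt; omega
    exact cell_joinIrred ha ha1 hu (hrowt (t : ℕ) htle) (hbt (t : ℕ) htle)
  · apply strictMono_of_consec
    intro p q hq
    have hple : (p : ℕ) ≤ m := by have := p.isLt; omega
    have hqle : (q : ℕ) ≤ m := by have := q.isLt; omega
    apply cell_lt_cell ha (hrowt (p : ℕ) hple) (hrowt (q : ℕ) hqle)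
    · rw [rowOf_val, rowOf_val]; omega
    · rw [rowOf_val, rowOf_val, bvOf, bvOf]; omega
    · rw [rowOf_val, rowOf_val, bvOf, bvOf]
      intro hcon
      omega


lemma run_to_L (ha : StrictMono a) :
    ∀ (n : ℕ) (i : Fin k), k - 1 - (i : ℕ) ≤ n → a i + k ≤ u + (i : ℕ) →
      ∃ j : Fin k, memL u a j ∧ a j + k ≤ u + (j : ℕ) ∧
        a j + 2 * (i : ℕ) ≤ a i + 2 * (j : ℕ) := by
  intro n
  induction n with
  | zero =>
    intro i h0 hrow
    have hik := i.isLt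
    have hnext : aNext u a i = u + 1 := by
      unfold aNext
      rw [dif_neg (by omega)]
    refine ⟨i, ⟨?_, ?_⟩, hrow, le_refl _⟩
    · rw [hnext]; omega
    · omega
  | succ n ih =>
    intro i hn hrow
    by_cases hmem : memL u a i
    · exact ⟨i, hmem, hrow, le_refl _⟩
    · have hilt := i.isLt
      have hiu : a i < u := by omega
      by_cases hik : (i : ℕ) + 1 < k
      · have hnext : aNext u a i = a ⟨(i : ℕ) + 1, hik⟩ := by
          unfold aNext
          rw [dif_pos hik]
        have h2 : ¬ (a i + 1 < aNext u a i) := fun hcon => hmem ⟨hcon, hiu⟩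
        rw [hnext] at h2
        have h3 : a i < a ⟨(i : ℕ) + 1, hik⟩ :=
          ha (show i < ⟨(i : ℕ) + 1, hik⟩ from by rw [Fin.lt_def]; exact Nat.lt_succ_self _)
        have hval : ((⟨(i : ℕ) + 1, hik⟩ : Fin k) : ℕ) = (i : ℕ) + 1 := rfl
        have hrow1 : a ⟨(i : ℕ) + 1, hik⟩ + k ≤ u + ((⟨(i : ℕ) + 1, hik⟩ : Fin k) : ℕ) := by
          rw [hval]; omega
        obtain ⟨j, hjL, hjrow, hjval⟩ := ih ⟨(i : ℕ) + 1, hik⟩ (by rw [hval]; omega) hrow1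
        refine ⟨j, hjL, hjrow, ?_⟩
        rw [hval] at hjval
        omega
      · have hnext : aNext u a i = u + 1 := by
          unfold aNext
          rw [dif_neg hik]
        have h2 : ¬ (a i + 1 < aNext u a i) := fun hcon => hmem ⟨hcon, hiu⟩
        rw [hnext] at h2
        omega

end RankAux

/-- The rank of `P₁` is the maximum of `u - k - a_l + 2l - 2` over the (1-based)
indices `l` in `{i ≤ k : aᵢ + 1 < a_{i+1}, aᵢ < u}` (with `a_{k+1} := u+1`). -/
theorem rankP1_eq_max {k u : ℕ} (a : Fin k → ℕ)
    (hk : 1 ≤ k) (hku : k ≤ u) (ha : StrictMono a) (ha1 : ∀ i, 1 ≤ a i)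
    (hau : ∀ i : Fin k, a i + k ≤ u + (i : ℕ) + 1)
    (hL : ∃ i : Fin k, memL u a i) :
    IsGreatest {z : ℤ | ∃ i : Fin k, memL u a i ∧
        z = (u : ℤ) - k - a i + 2 * ((i : ℕ) + 1) - 2}
      ((rankP1 u a : ℕ) : ℤ) := by
  classical
  have hu2 : ∀ j : Fin k, a j ≤ u := fun j => by have := hau j; have := j.isLt; omega
  have hrowL : ∀ i : Fin k, memL u a i → a i + k ≤ u + (i : ℕ) := by
    intro i hi
    by_cases h : (i : ℕ) + 1 < k
    · have h1 : aNext u a i = a ⟨(i : ℕ) + 1, h⟩ := by unfold aNext; rw [dif_pos h]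
      have h2 := hau ⟨(i : ℕ) + 1, h⟩
      have h3 := hi.1
      rw [h1] at h3
      have hval : ((⟨(i : ℕ) + 1, h⟩ : Fin k) : ℕ) = (i : ℕ) + 1 := rfl
      rw [hval] at h2
      omega
    · have h3 := hi.2
      have := i.isLt
      omega
  set F : Finset (Fin k) := Finset.univ.filter (fun i => memL u a i) with hF
  have hFne : F.Nonempty := by
    obtain ⟨i, hi⟩ := hL
    exact ⟨i, by simp [hF, hi]⟩
  obtain ⟨i0, hi0F, hi0max⟩ := F.exists_max_image (fun i => u + 2 * (i : ℕ) - k - a i) hFne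
  have hi0L : memL u a i0 := by
    have := hi0F
    rw [hF, Finset.mem_filter] at this
    exact this.2
  set m0 : ℕ := u + 2 * (i0 : ℕ) - k - a i0 with hm0
  have hrow0 := hrowL i0 hi0L
  have hgreat : IsGreatest {m : ℕ | ∃ f : Fin (m + 1) → (Fin k → ℕ),
      (∀ t, joinIrredD1 u a (f t)) ∧ StrictMono f} m0 := by
    constructor
    · exact RankAux.exists_chain ha ha1 hu2 i0 hrow0
    · rintro m ⟨f, hf, hmono⟩
      choose I B hB1 hB2 hfc using fun t => RankAux.joinIrred_eq_cell ha ha1 (hf t)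
      have key : ∀ t : Fin (m + 1),
          (B 0 : ℤ) - 2 * ((I 0 : Fin k) : ℤ) + (t : ℕ) ≤
            (B t : ℤ) - 2 * ((I t : Fin k) : ℤ) := by
        intro t
        induction t using Fin.induction with
        | zero => simp
        | succ p ih =>
          have hlt : f p.castSucc < f p.succ := hmono (Fin.castSucc_lt_succ : p.castSucc < p.succ)
          rw [hfc p.castSucc, hfc p.succ] at hlt
          have h7 := RankAux.cell_lt_phi (hB1 p.castSucc) (hB1 p.succ) hlt
          have h8 : (p.succ : ℕ) = (p.castSucc : ℕ) + 1 := by simp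
          omega
      have h1 := key (Fin.last m)
      have h9 : ((Fin.last m : Fin (m + 1)) : ℕ) = m := rfl
      rw [h9] at h1
      have h2 := hB1 0
      have h3 := hB2 0
      have h4 := hB2 (Fin.last m)
      have h5 := (I (Fin.last m)).isLt
      have h5b := (I 0).isLt
      obtain ⟨j, hjL, hjrow, hjval⟩ :=
        RankAux.run_to_L (u := u) ha (k - 1 - ((I 0 : Fin k) : ℕ)) (I 0) le_rfl (by omega)
      have hjF : j ∈ F := by rw [hF, Finset.mem_filter]; exact ⟨Finset.mem_univ _, hjL⟩
      have h6 := hi0max j hjF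
      omega
  have hrank : rankP1 u a = m0 := by
    unfold rankP1
    exact hgreat.csSup_eq
  rw [hrank]
  constructor
  · refine ⟨i0, hi0L, ?_⟩
    push_cast
    omega
  · rintro z ⟨i, hiL, rfl⟩
    have h1 : i ∈ F := by rw [hF, Finset.mem_filter]; exact ⟨Finset.mem_univ _, hiL⟩
    have h2 := hi0max i h1
    have h3 := hrowL i hiL
    push_cast
    omega
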